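/- Let σ : ℝ^d → ℝ^{d×d} satisfy: σ(x)σ(x)ᵀ ≥ λ² I for all x (uniform positive definiteness), and ‖σ(x)‖_op ≤ M for all x. Fix 0 < C < λ and define σ̃(x) := √(σ(x)σ(x)ᵀ − C² I) (symmetric positive semidefinite square root). Then for all x, y ∈ ℝ^d, ‖σ̃(x) − σ̃(y)‖_HS ≤ (M/√(λ² − C²)) ‖σ(x) − σ(y)‖_HS. -/

import Mathlib

open Matrix

/-- Hilbert–Schmidt (Frobenius) norm of a real matrix. -/
noncomputable def frobNorm {d m : ℕ} (A : Matrix (Fin d) (Fin m) ℝ) : ℝ :=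
  Real.sqrt (∑ i, ∑ j, (A i j) ^ 2)

/-- Euclidean operator norm of a real matrix. -/
noncomputable def opNorm {d m : ℕ} (A : Matrix (Fin d) (Fin m) ℝ) : ℝ :=
  ‖(Matrix.toEuclideanLin A).toContinuousLinearMap‖

section Aux

lemma mulVec_sq_le {d m : ℕ} (A : Matrix (Fin d) (Fin m) ℝ) (v : Fin m → ℝ) :
    ∑ i, (A.mulVec v i) ^ 2 ≤ opNorm A ^ 2 * ∑ j, (v j) ^ 2 := by
  have h := (Matrix.toEuclideanLin A).toContinuousLinearMap.le_opNorm
    ((WithLp.equiv 2 (Fin m → ℝ)).symm v)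
  rw [LinearMap.coe_toContinuousLinearMap'] at h
  rw [WithLp.equiv_symm_apply, Matrix.toEuclideanLin_apply_piLp_toLp] at h
  rw [EuclideanSpace.norm_eq, EuclideanSpace.norm_eq] at h
  simp only [PiLp.toLp_apply, Real.norm_eq_abs, sq_abs] at h
  have h1 : Real.sqrt (∑ i, (A.mulVec v i) ^ 2)
      ≤ opNorm A * Real.sqrt (∑ j, (v j) ^ 2) := h
  have h2 := pow_le_pow_left₀ (Real.sqrt_nonneg _) h1 2
  rw [Real.sq_sqrt (Finset.sum_nonneg fun i _ => sq_nonneg _)] at h2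
  calc ∑ i, (A.mulVec v i) ^ 2 ≤ (opNorm A * Real.sqrt (∑ j, (v j) ^ 2)) ^ 2 := h2
    _ = opNorm A ^ 2 * ∑ j, (v j) ^ 2 := by
        rw [mul_pow, Real.sq_sqrt (Finset.sum_nonneg fun i _ => sq_nonneg _)]

/-- The matrix viewed as a point of Euclidean space, for Frobenius-norm computations. -/
noncomputable def matEuc {d m : ℕ} (A : Matrix (Fin d) (Fin m) ℝ) :
    EuclideanSpace ℝ (Fin d × Fin m) :=
  (WithLp.equiv 2 _).symm (fun p => A p.1 p.2)

lemma frobNorm_eq_norm {d m : ℕ} (A : Matrix (Fin d) (Fin m) ℝ) :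
    frobNorm A = ‖matEuc A‖ := by
  rw [EuclideanSpace.norm_eq, frobNorm]
  congr 1
  simp only [matEuc, WithLp.equiv_symm_apply, PiLp.toLp_apply, Real.norm_eq_abs, sq_abs,
    Fintype.sum_prod_type]

lemma inner_matEuc {d m : ℕ} (A B : Matrix (Fin d) (Fin m) ℝ) :
    @inner ℝ _ _ (matEuc A) (matEuc B) = ∑ i, ∑ j, A i j * B i j := by
  simp [matEuc, PiLp.inner_apply, RCLike.inner_apply, Fintype.sum_prod_type, mul_comm]

lemma frobNorm_nonneg {d m : ℕ} (A : Matrix (Fin d) (Fin m) ℝ) : 0 ≤ frobNorm A :=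
  Real.sqrt_nonneg _

lemma frobNorm_sq {d m : ℕ} (A : Matrix (Fin d) (Fin m) ℝ) :
    frobNorm A ^ 2 = ∑ i, ∑ j, (A i j) ^ 2 :=
  Real.sq_sqrt (Finset.sum_nonneg fun _ _ => Finset.sum_nonneg fun _ _ => sq_nonneg _)

lemma frobNorm_transpose {d m : ℕ} (A : Matrix (Fin d) (Fin m) ℝ) :
    frobNorm Aᵀ = frobNorm A := by
  unfold frobNorm
  rw [Finset.sum_comm]
  simp [transpose_apply]

lemma frob_mul_le {d m : ℕ} (A : Matrix (Fin d) (Fin d) ℝ)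
    (B : Matrix (Fin d) (Fin m) ℝ) :
    frobNorm (A * B) ≤ opNorm A * frobNorm B := by
  have key : ∑ i, ∑ j, ((A * B) i j) ^ 2
      ≤ opNorm A ^ 2 * ∑ i, ∑ j, (B i j) ^ 2 := by
    rw [Finset.sum_comm, Finset.sum_comm (f := fun i j => (B i j) ^ 2), Finset.mul_sum]
    apply Finset.sum_le_sum
    intro j _
    have hv := mulVec_sq_le A (fun k => B k j)
    calc ∑ i, ((A * B) i j) ^ 2 = ∑ i, (A.mulVec (fun k => B k j) i) ^ 2 := by
          apply Finset.sum_congr rfl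
          intro i _
          congr 1
      _ ≤ opNorm A ^ 2 * ∑ k, (B k j) ^ 2 := hv
  have h0 : (0:ℝ) ≤ opNorm A := norm_nonneg _
  unfold frobNorm
  calc Real.sqrt (∑ i, ∑ j, ((A * B) i j) ^ 2)
      ≤ Real.sqrt (opNorm A ^ 2 * ∑ i, ∑ j, (B i j) ^ 2) := Real.sqrt_le_sqrt key
    _ = opNorm A * Real.sqrt (∑ i, ∑ j, (B i j) ^ 2) := by
        rw [Real.sqrt_mul (sq_nonneg _), Real.sqrt_sq h0]

lemma psd_dot {d : ℕ} {M : Matrix (Fin d) (Fin d) ℝ} (hM : M.PosSemidef)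
    (h : Fin d → ℝ) : 0 ≤ M.mulVec h ⬝ᵥ h := by
  have := hM.dotProduct_mulVec_nonneg h
  simpa [dotProduct_comm] using this

lemma quad_lower {d : ℕ} {S : Matrix (Fin d) (Fin d) ℝ} (hS : S.PosSemidef)
    {α : ℝ} (hα : 0 ≤ α)
    (hsq : ∀ h : Fin d → ℝ, α ^ 2 * (h ⬝ᵥ h) ≤ (S * S).mulVec h ⬝ᵥ h) :
    ∀ h : Fin d → ℝ, α * (h ⬝ᵥ h) ≤ S.mulVec h ⬝ᵥ h := by
  set M : Matrix (Fin d) (Fin d) ℝ := S - α • 1 with hMdef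
  have hM : M.IsHermitian := by
    apply IsHermitian.sub hS.1
    rw [IsHermitian, conjTranspose_smul, conjTranspose_one, star_trivial]
  have hev : ∀ i, 0 ≤ hM.eigenvalues i := by
    intro i
    set v : Fin d → ℝ := ⇑(hM.eigenvectorBasis i) with hvdef
    set μ : ℝ := hM.eigenvalues i with hμdef
    have hv : M *ᵥ v = μ • v := hM.mulVec_eigenvectorBasis i
    have hvv : v ⬝ᵥ v = 1 := by
      have h1 : ‖hM.eigenvectorBasis i‖ = 1 := hM.eigenvectorBasis.orthonormal.1 i
      have h2 : @inner ℝ _ _ (hM.eigenvectorBasis i) (hM.eigenvectorBasis i)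
          = ‖hM.eigenvectorBasis i‖ ^ 2 := real_inner_self_eq_norm_sq _
      rw [h1] at h2
      have h3 : @inner ℝ _ _ (hM.eigenvectorBasis i) (hM.eigenvectorBasis i)
          = v ⬝ᵥ v := by
        simp only [PiLp.inner_apply, RCLike.inner_apply, conj_trivial, dotProduct, hvdef, mul_comm]
      rw [h3] at h2; linarith [h2]
    have hSv : S *ᵥ v = (μ + α) • v := by
      have hSM : S = M + α • 1 := by rw [hMdef]; abel
      rw [hSM, add_mulVec, hv, smul_mulVec, one_mulVec, add_smul]
    have hS2v : (S * S) *ᵥ v = ((μ + α) ^ 2) • v := by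
      rw [← mulVec_mulVec, hSv, mulVec_smul, hSv, smul_smul, ← pow_two]
    have h1 : α ^ 2 ≤ (μ + α) ^ 2 := by
      have := hsq v
      rw [hS2v, smul_dotProduct, hvv] at this
      simpa using this
    have h2 : 0 ≤ μ + α := by
      have := psd_dot hS v
      rw [hSv, smul_dotProduct, hvv] at this
      simpa using this
    nlinarith
  have hMpsd : M.PosSemidef := hM.posSemidef_iff_eigenvalues_nonneg.mpr hev
  intro h
  have := psd_dot hMpsd h
  rw [hMdef, sub_mulVec, smul_mulVec, one_mulVec, sub_dotProduct,
    smul_dotProduct] at this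
  rw [smul_eq_mul] at this
  linarith [this]

end Aux

/-- Diffusion splitting lemma estimate: if `σ(x)σ(x)ᵀ ≥ λ² I` uniformly and
`‖σ(x)‖_op ≤ M`, then for `0 < C < λ` the modified coefficient
`σ̃(x) = √(σ(x)σ(x)ᵀ - C² I)` (the symmetric positive semidefinite square root,
here represented by any positive semidefinite `S`, `T` with `S S = σ(x)σ(x)ᵀ - C² I`,
`T T = σ(y)σ(y)ᵀ - C² I`) satisfies
`‖σ̃(x) - σ̃(y)‖_HS ≤ (M/√(λ² - C²)) ‖σ(x) - σ(y)‖_HS`. -/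
theorem diffusion_splitting_lipschitz
    {d : ℕ} (σ : (Fin d → ℝ) → Matrix (Fin d) (Fin d) ℝ)
    (lam M C : ℝ) (hC : 0 < C) (hClam : C < lam)
    (hunif : ∀ x : Fin d → ℝ, ∀ h : Fin d → ℝ,
      lam ^ 2 * (h ⬝ᵥ h) ≤ (σ x * (σ x)ᵀ).mulVec h ⬝ᵥ h)
    (hbound : ∀ x : Fin d → ℝ, opNorm (σ x) ≤ M)
    (x y : Fin d → ℝ) (S T : Matrix (Fin d) (Fin d) ℝ)
    (hS : S.PosSemidef) (hT : T.PosSemidef)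
    (hSsq : S * S = σ x * (σ x)ᵀ - C ^ 2 • (1 : Matrix (Fin d) (Fin d) ℝ))
    (hTsq : T * T = σ y * (σ y)ᵀ - C ^ 2 • (1 : Matrix (Fin d) (Fin d) ℝ)) :
    frobNorm (S - T) ≤ M / Real.sqrt (lam ^ 2 - C ^ 2) * frobNorm (σ x - σ y) := by
  set α := Real.sqrt (lam ^ 2 - C ^ 2) with hαdef
  have hlc : 0 < lam ^ 2 - C ^ 2 := by nlinarith
  have hαpos : 0 < α := Real.sqrt_pos.mpr hlc
  have hα2 : α ^ 2 = lam ^ 2 - C ^ 2 := Real.sq_sqrt hlc.le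
  have hM0 : 0 ≤ M := le_trans (norm_nonneg _) (hbound x)
  -- quadratic lower bounds for S and T
  have hSquad : ∀ h : Fin d → ℝ, α * (h ⬝ᵥ h) ≤ S.mulVec h ⬝ᵥ h := by
    apply quad_lower hS hαpos.le
    intro h
    rw [hSsq, sub_mulVec, smul_mulVec, one_mulVec, sub_dotProduct,
      smul_dotProduct, smul_eq_mul, hα2]
    have := hunif x h
    linarith
  have hTquad : ∀ h : Fin d → ℝ, α * (h ⬝ᵥ h) ≤ T.mulVec h ⬝ᵥ h := by
    apply quad_lower hT hαpos.le
    intro h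
    rw [hTsq, sub_mulVec, smul_mulVec, one_mulVec, sub_dotProduct,
      smul_dotProduct, smul_eq_mul, hα2]
    have := hunif y h
    linarith
  set E : Matrix (Fin d) (Fin d) ℝ := S - T with hEdef
  have hSsym : ∀ k j, S k j = S j k := by
    intro k j
    have h := congrFun (congrFun hS.1 k) j
    simp only [conjTranspose_apply, star_trivial] at h
    exact h.symm
  have hTsym : ∀ k j, T k j = T j k := by
    intro k j
    have h := congrFun (congrFun hT.1 k) j
    simp only [conjTranspose_apply, star_trivial] at h
    exact h.symm
  -- trace identities
  have hip1 : ∑ i, ∑ j, E i j * (S * E) i j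
      = ∑ j, (S.mulVec (fun k => E k j) ⬝ᵥ fun k => E k j) := by
    rw [Finset.sum_comm]
    refine Finset.sum_congr rfl fun j _ => ?_
    simp only [mulVec, dotProduct, mul_apply]
    exact Finset.sum_congr rfl fun i _ => mul_comm _ _
  have hip2 : ∑ i, ∑ j, E i j * (E * T) i j
      = ∑ i, (T.mulVec (fun k => E i k) ⬝ᵥ fun k => E i k) := by
    refine Finset.sum_congr rfl fun i _ => ?_
    simp only [mulVec, dotProduct, mul_apply, Finset.mul_sum, Finset.sum_mul]
    refine Finset.sum_congr rfl fun j _ => Finset.sum_congr rfl fun k _ => ?_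
    rw [hTsym k j]
    ring
  have hlow1 : α * (∑ i, ∑ j, (E i j) ^ 2) ≤ ∑ i, ∑ j, E i j * (S * E) i j := by
    rw [hip1]
    have hco : ∑ i, ∑ j, (E i j) ^ 2
        = ∑ j, ((fun k => E k j) ⬝ᵥ fun k => E k j) := by
      rw [Finset.sum_comm]
      simp [dotProduct, pow_two]
    rw [hco, Finset.mul_sum]
    exact Finset.sum_le_sum fun j _ => hSquad _
  have hlow2 : α * (∑ i, ∑ j, (E i j) ^ 2) ≤ ∑ i, ∑ j, E i j * (E * T) i j := by
    rw [hip2]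
    have hco : ∑ i, ∑ j, (E i j) ^ 2
        = ∑ i, ((fun k => E i k) ⬝ᵥ fun k => E i k) := by
      simp [dotProduct, pow_two]
    rw [hco, Finset.mul_sum]
    exact Finset.sum_le_sum fun i _ => hTquad _
  have hSE : S * E + E * T = S * S - T * T := by
    rw [hEdef]; noncomm_ring
  have hipD : ∑ i, ∑ j, E i j * (S * S - T * T) i j
      = (∑ i, ∑ j, E i j * (S * E) i j) + ∑ i, ∑ j, E i j * (E * T) i j := by
    rw [← hSE]
    simp [Matrix.add_apply, mul_add, Finset.sum_add_distrib]
  have hkey : 2 * α * frobNorm E ^ 2 ≤ ∑ i, ∑ j, E i j * (S * S - T * T) i j := by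
    rw [frobNorm_sq, hipD]
    linarith
  have hcs : ∑ i, ∑ j, E i j * (S * S - T * T) i j
      ≤ frobNorm E * frobNorm (S * S - T * T) := by
    rw [← inner_matEuc, frobNorm_eq_norm, frobNorm_eq_norm]
    exact real_inner_le_norm _ _
  have hDw : S * S - T * T = σ x * (σ x - σ y)ᵀ + (σ x - σ y) * (σ y)ᵀ := by
    rw [hSsq, hTsq, transpose_sub]
    noncomm_ring
  have ht1 : frobNorm (σ x * (σ x - σ y)ᵀ) ≤ M * frobNorm (σ x - σ y) := by
    calc frobNorm (σ x * (σ x - σ y)ᵀ) ≤ opNorm (σ x) * frobNorm (σ x - σ y)ᵀ :=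
          frob_mul_le _ _
      _ = opNorm (σ x) * frobNorm (σ x - σ y) := by rw [frobNorm_transpose]
      _ ≤ M * frobNorm (σ x - σ y) :=
          mul_le_mul_of_nonneg_right (hbound x) (frobNorm_nonneg _)
  have ht2 : frobNorm ((σ x - σ y) * (σ y)ᵀ) ≤ M * frobNorm (σ x - σ y) := by
    have : frobNorm ((σ x - σ y) * (σ y)ᵀ) = frobNorm (σ y * (σ x - σ y)ᵀ) := by
      rw [← frobNorm_transpose ((σ x - σ y) * (σ y)ᵀ), transpose_mul,
        transpose_transpose]
    rw [this]
    calc frobNorm (σ y * (σ x - σ y)ᵀ) ≤ opNorm (σ y) * frobNorm (σ x - σ y)ᵀ :=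
          frob_mul_le _ _
      _ = opNorm (σ y) * frobNorm (σ x - σ y) := by rw [frobNorm_transpose]
      _ ≤ M * frobNorm (σ x - σ y) :=
          mul_le_mul_of_nonneg_right (hbound y) (frobNorm_nonneg _)
  have htri : frobNorm (S * S - T * T) ≤ 2 * (M * frobNorm (σ x - σ y)) := by
    rw [hDw]
    have : frobNorm (σ x * (σ x - σ y)ᵀ + (σ x - σ y) * (σ y)ᵀ)
        ≤ frobNorm (σ x * (σ x - σ y)ᵀ) + frobNorm ((σ x - σ y) * (σ y)ᵀ) := by
      rw [frobNorm_eq_norm, frobNorm_eq_norm, frobNorm_eq_norm]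
      have hadd : matEuc (σ x * (σ x - σ y)ᵀ + (σ x - σ y) * (σ y)ᵀ)
          = matEuc (σ x * (σ x - σ y)ᵀ) + matEuc ((σ x - σ y) * (σ y)ᵀ) := rfl
      rw [hadd]
      exact norm_add_le _ _
    linarith
  -- conclude
  have h1 : 2 * α * frobNorm E ^ 2 ≤ frobNorm E * frobNorm (S * S - T * T) :=
    le_trans hkey hcs
  rcases eq_or_lt_of_le (frobNorm_nonneg E) with h0 | h0
  · rw [← h0]
    exact mul_nonneg (div_nonneg hM0 hαpos.le) (frobNorm_nonneg _)
  · rw [div_mul_eq_mul_div, le_div_iff₀ hαpos]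
    nlinarith [mul_le_mul_of_nonneg_left htri h0.le, h1, frobNorm_nonneg (σ x - σ y)]
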